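/- arXiv:2105.01258 — 2 statements merged into one kernel-verified Lean document; each statement's English description precedes it below -/
import Mathlib

section
/- Let q be a point in the plane and let v_1, ..., v_n be points in the plane arranged so that the closed polygonal loop through v_1, ..., v_n winds once around q (q lies in a bounded region enclosed by the polygon). Then the sum over i of the angles ∠ v_{i-1} q v_i (indices mod n) is at least 2π. -/
open EuclideanGeometry Set
open Complex Real


private lemma sector_pos {w z : ℂ} (hw : 0 < w.im) (hz : z ∈ segment ℝ 1 w) (hz0 : z ≠ 0) :
    0 ≤ z.arg ∧ z.arg ≤ w.arg := by
  obtain ⟨a, b, ha, hb, hab, rfl⟩ := hz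
  have hwne : w ≠ 0 := fun h => by simp [h] at hw
  set z := a • (1:ℂ) + b • w with hzdef
  have him : z.im = b * w.im := by simp [hzdef, Complex.real_smul]
  have hargz0 : 0 ≤ z.arg := Complex.arg_nonneg_iff.2 (by rw [him]; positivity)
  refine ⟨hargz0, ?_⟩
  have hargzpi : z.arg ≠ π := by
    intro h
    have h2 := Complex.arg_eq_pi_iff.1 h
    have hb0 : b = 0 := by
      have h3 := h2.2
      rw [him] at h3
      rcases mul_eq_zero.1 h3 with h' | h'
      · exact h'
      · exact absurd h' (ne_of_gt hw)
    have hza : z = (a:ℂ) := by simp [hzdef, hb0, Complex.real_smul]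
    rw [hza] at h2
    have : (0:ℝ) < a := by
      rcases lt_or_eq_of_le ha with h' | h'
      · exact h'
      · exfalso; exact hz0 (by simp [hza, ← h'])
    simp at h2
    linarith
  have hargw0 : 0 < w.arg := by
    rcases lt_or_eq_of_le (Complex.arg_nonneg_iff.2 hw.le) with h | h
    · exact h
    · exact absurd (Complex.arg_eq_zero_iff.1 h.symm).2 (ne_of_gt hw)
  have hargwpi : w.arg ≠ π := fun h => absurd (Complex.arg_eq_pi_iff.1 h).2 (ne_of_gt hw)
  set u := w * (starRingEnd ℂ) z with hu
  have hu0 : u ≠ 0 := mul_ne_zero hwne (by simpa using hz0)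
  have huim : 0 ≤ u.im := by
    have h4 : u.im = a * w.im := by
      simp [hu, hzdef, Complex.real_smul, Complex.mul_im, Complex.add_im, Complex.add_re]
      ring
    rw [h4]; positivity
  have hargu0 : 0 ≤ u.arg := Complex.arg_nonneg_iff.2 huim
  -- arg w = arg z + arg u (mod 2π)
  have hmul : z * u = ((Complex.normSq z : ℝ) : ℂ) * w := by
    rw [hu]; rw [← Complex.mul_conj]; ring
  have hcoe : (w.arg : Real.Angle) = ((z.arg + u.arg : ℝ) : Real.Angle) := by
    have h5 : ((z * u).arg : Real.Angle) = ((z.arg : ℝ) : Real.Angle) + u.arg :=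
      Complex.arg_mul_coe_angle hz0 hu0
    rw [hmul, Complex.arg_real_mul _ (Complex.normSq_pos.2 hz0)] at h5
    rw [h5, Real.Angle.coe_add]
  obtain ⟨k, hk⟩ := Real.Angle.angle_eq_iff_two_pi_dvd_sub.1 hcoe
  have hbz := Complex.arg_le_pi z
  have hbu := Complex.arg_le_pi u
  have hbw := Complex.arg_le_pi w
  have hpi := Real.pi_pos
  have hk0 : k = 0 := by
    by_contra hkne
    rcases lt_or_gt_of_ne hkne with h' | h'
    · have hk1 : k ≤ (-1:ℤ) := by omega
      have : (k:ℝ) ≤ -1 := by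
        have h6 : (k:ℝ) ≤ ((-1:ℤ):ℝ) := Int.cast_le.2 hk1
        norm_num at h6; exact h6
      nlinarith [mul_le_mul_of_nonneg_left this (by linarith : (0:ℝ) ≤ 2*π)]
    · have : (1:ℝ) ≤ (k:ℝ) := by exact_mod_cast h'
      have hzlt : z.arg < π := lt_of_le_of_ne hbz hargzpi
      nlinarith
  rw [hk0] at hk
  simp at hk
  linarith


private lemma sector {w z : ℂ} (hz : z ∈ segment ℝ 1 w) (h0 : (0:ℂ) ∉ segment ℝ 1 w) :
    z ≠ 0 ∧ min 0 w.arg ≤ z.arg ∧ z.arg ≤ max 0 w.arg := by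
  have hz0 : z ≠ 0 := fun h => h0 (h ▸ hz)
  have hw0 : w ≠ 0 := fun h => h0 (h ▸ right_mem_segment ℝ 1 w)
  refine ⟨hz0, ?_⟩
  rcases lt_trichotomy 0 w.im with hwim | hwim | hwim
  · obtain ⟨h1, h2⟩ := sector_pos hwim hz hz0
    have : 0 < w.arg := by
      rcases lt_or_eq_of_le (Complex.arg_nonneg_iff.2 hwim.le) with h | h
      · exact h
      · exact absurd (Complex.arg_eq_zero_iff.1 h.symm).2 (ne_of_gt hwim)
    constructor
    · rw [min_eq_left this.le]; exact h1
    · rw [max_eq_right this.le]; exact h2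
  · -- w is real
    have hwre : 0 < w.re := by
      by_contra hre
      push_neg at hre
      apply h0
      refine ⟨-w.re / (1 - w.re), 1 / (1 - w.re), ?_, ?_, ?_, ?_⟩
      · apply div_nonneg (by linarith) (by linarith)
      · apply div_nonneg (by norm_num) (by linarith)
      · have h1w : (1:ℝ) - w.re ≠ 0 := by intro h; linarith
        field_simp
        ring
      · have hw' : w = (w.re : ℂ) := Complex.ext rfl (by simp [← hwim])
        rw [hw', Complex.real_smul, Complex.real_smul]
        push_cast
        have h1w : (1:ℝ) - w.re ≠ 0 := by intro h; linarith
        field_simp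
        simp
    have hwarg : w.arg = 0 := by
      have hw' : w = (w.re : ℂ) := Complex.ext rfl (by simp [← hwim])
      rw [hw']; exact Complex.arg_ofReal_of_nonneg hwre.le
    have hzarg : z.arg = 0 := by
      obtain ⟨a, b, ha, hb, hab, rfl⟩ := hz
      apply Complex.arg_eq_zero_iff.2
      constructor
      · simp only [Complex.add_re, Complex.real_smul, Complex.mul_re, Complex.ofReal_re,
          Complex.ofReal_im, Complex.one_re, Complex.one_im]
        nlinarith [mul_nonneg hb hwre.le]
      · simp [Complex.real_smul, Complex.mul_im, ← hwim]
    simp [hwarg, hzarg]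
  · -- w.im < 0 : conjugate
    obtain ⟨a, b, ha, hb, hab, hzeq⟩ := hz
    have hconjz : (starRingEnd ℂ) z ∈ segment ℝ 1 ((starRingEnd ℂ) w) := by
      refine ⟨a, b, ha, hb, hab, ?_⟩
      rw [← hzeq]
      simp [Complex.real_smul, map_add, map_mul, Complex.conj_ofReal]
    have hcz0 : (starRingEnd ℂ) z ≠ 0 := by simpa using hz0
    obtain ⟨h1, h2⟩ := sector_pos (by simpa using hwim : 0 < ((starRingEnd ℂ) w).im) hconjz hcz0
    have hwpi : w.arg ≠ π := fun h => absurd (Complex.arg_eq_pi_iff.1 h).2 (ne_of_lt hwim)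
    have hzim : z.im ≤ 0 := by
      rw [← hzeq]
      simp only [Complex.add_im, Complex.real_smul, Complex.mul_im, Complex.ofReal_re,
        Complex.ofReal_im, Complex.one_im, Complex.one_re]
      nlinarith [mul_nonneg hb (neg_nonneg.2 hwim.le)]
    have hzpi : z.arg ≠ π := by
      intro h
      obtain ⟨hre, him⟩ := Complex.arg_eq_pi_iff.1 h
      have hb0 : b * w.im = 0 := by
        rw [← hzeq] at him
        simpa [Complex.real_smul, Complex.mul_im] using him
      have hb0' : b = 0 := by
        rcases mul_eq_zero.1 hb0 with h' | h'
        · exact h'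
        · exact absurd h' (ne_of_lt hwim)
      have : z = (a:ℂ) := by rw [← hzeq, hb0']; simp [Complex.real_smul]
      rw [this] at hre
      simp at hre
      rw [hb0'] at hab
      have ha' : a < 0 := by simpa using hre
      linarith
    rw [Complex.arg_conj, if_neg hzpi] at h1 h2
    rw [Complex.arg_conj, if_neg hwpi] at h2
    have hwneg : w.arg < 0 := Complex.arg_neg_iff.2 hwim
    constructor
    · rw [min_eq_right hwneg.le]; linarith
    · rw [max_eq_left hwneg.le]; linarith



/-- Let `q` be a point in the plane (modeled as `ℂ`) and `v 0, …, v (n-1)`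
points in the plane, extended periodically (`v (i + n) = v i`), all distinct from `q`.
If `q` lies in a bounded region enclosed by the closed polygonal loop through the `v i`
(i.e. `q` is off the polygon and its connected component in the complement of the union of
the edges is bounded), then the sum of the unsigned angles `∠ v (i) q (v (i+1))`
(equivalently `∠ v_{i-1} q v_i`, indices mod `n`) is at least `2 * π`. -/
theorem stmt0 (n : ℕ) (hn : 0 < n) (v : ℤ → ℂ) (hper : ∀ i : ℤ, v (i + n) = v i)
    (q : ℂ) (hq : ∀ i : ℤ, q ≠ v i)
    (hqoff : q ∉ ⋃ i ∈ Finset.range n, segment ℝ (v i) (v (i + 1)))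
    (hbounded : Bornology.IsBounded
      (connectedComponentIn (⋃ i ∈ Finset.range n, segment ℝ (v i) (v (i + 1)))ᶜ q)) :
    2 * Real.pi ≤ ∑ i ∈ Finset.range n, EuclideanGeometry.angle (v i) q (v (i + 1)) := by
  classical
  by_contra hcon
  push_neg at hcon
  have hpi := Real.pi_pos
  set P : Set ℂ := ⋃ i ∈ Finset.range n, segment ℝ (v i) (v (i + 1)) with hPdef
  set w : ℕ → ℂ := fun i => v (i : ℤ) - q with hwdef
  have hw : ∀ i : ℕ, w i ≠ 0 := fun i => sub_ne_zero.2 fun h => hq (i : ℤ) h.symm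
  have hwsucc : ∀ i : ℕ, w (i + 1) = v ((i : ℤ) + 1) - q := by
    intro i; simp only [hwdef]; push_cast; ring_nf
  set δ : ℕ → ℝ := fun i => (w (i + 1) / w i).arg with hδdef
  -- relating δ to the unsigned angles
  have hangle : ∀ i : ℕ, EuclideanGeometry.angle (v (i:ℤ)) q (v ((i:ℤ) + 1)) = |δ i| := by
    intro i
    haveI := Complex.finrank_real_complex_fact
    have h1 : EuclideanGeometry.angle (v (i:ℤ)) q (v ((i:ℤ) + 1))
        = InnerProductGeometry.angle (w i) (w (i + 1)) := by
      rw [EuclideanGeometry.angle, hwsucc]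
      simp [hwdef, vsub_eq_sub]
    rw [h1, Complex.orientation.angle_eq_abs_oangle_toReal (hw i) (hw (i + 1)),
        Complex.oangle, Complex.arg_coe_angle_toReal_eq_arg]
    congr 1
    have h2 : (starRingEnd ℂ) (w i) * w (i + 1)
        = ((Complex.normSq (w i) : ℝ) : ℂ) * (w (i + 1) / w i) := by
      rw [eq_comm]
      field_simp [hw i]
      rw [← Complex.mul_conj]
      ring
    rw [h2, Complex.arg_real_mul _ (Complex.normSq_pos.2 (hw i))]
  -- the lifted arguments at vertices
  set ψ : ℕ → ℝ := fun i => (w 0).arg + ∑ j ∈ Finset.range i, δ j with hψdef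
  have hψsucc : ∀ i : ℕ, ψ (i + 1) = ψ i + δ i := by
    intro i; simp only [hψdef, Finset.sum_range_succ]; ring
  have hψcoe : ∀ i : ℕ, ((ψ i : ℝ) : Real.Angle) = ((w i).arg : Real.Angle) := by
    intro i
    induction i with
    | zero => simp [hψdef]
    | succ i ih =>
      rw [hψsucc i, Real.Angle.coe_add, ih, hδdef]
      have hmul : w i * (w (i + 1) / w i) = w (i + 1) := by
        rw [← mul_div_assoc]; exact mul_div_cancel_left₀ _ (hw i)
      rw [← Complex.arg_mul_coe_angle (hw i) (div_ne_zero (hw (i+1)) (hw i)), hmul]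
  have hpolar : ∀ i : ℕ, w i = ((‖w i‖ : ℝ) : ℂ) * Complex.exp ((ψ i : ℂ) * Complex.I) := by
    intro i
    obtain ⟨k, hk⟩ := Real.Angle.angle_eq_iff_two_pi_dvd_sub.1 (hψcoe i)
    have hexp : Complex.exp (((w i).arg : ℂ) * Complex.I)
        = Complex.exp ((ψ i : ℂ) * Complex.I) := by
      rw [Complex.exp_eq_exp_iff_exists_int]
      refine ⟨-k, ?_⟩
      have hk' : ((w i).arg : ℝ) = ψ i - 2 * π * k := by linarith
      push_cast [hk']
      ring
    conv_lhs => rw [← Complex.norm_mul_exp_arg_mul_I (w i)]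
    rw [hexp]
  -- every point of segment i has direction with lifted argument in [min, max] of ψ i, ψ (i+1)
  have hseg : ∀ i : ℕ, i < n → ∀ z ∈ segment ℝ (v (i:ℤ)) (v ((i:ℤ) + 1)),
      ∃ θ : ℝ, min (ψ i) (ψ (i + 1)) ≤ θ ∧ θ ≤ max (ψ i) (ψ (i + 1)) ∧
        z - q = ((‖z - q‖ : ℝ) : ℂ) * Complex.exp ((θ : ℂ) * Complex.I) := by
    intro i hi z hzseg
    have hsub : segment ℝ (v (i:ℤ)) (v ((i:ℤ) + 1)) ⊆ P := by
      intro x hx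
      rw [hPdef]
      exact Set.mem_biUnion (Finset.mem_range.2 hi) hx
    obtain ⟨a, b, ha, hb, hab, hzeq⟩ := hzseg
    have hab' : (a : ℂ) + (b : ℂ) = 1 := by exact_mod_cast hab
    have hzq : z - q = (a : ℂ) * w i + (b : ℂ) * w (i + 1) := by
      rw [← hzeq, hwsucc]
      simp only [hwdef, Complex.real_smul]
      linear_combination q * hab'
    have hz' : (z - q) / w i ∈ segment ℝ 1 (w (i + 1) / w i) := by
      refine ⟨a, b, ha, hb, hab, ?_⟩
      rw [eq_div_iff (hw i), hzq]
      simp only [Complex.real_smul, smul_eq_mul, mul_one]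
      rw [add_mul, mul_assoc, div_mul_cancel₀ _ (hw i)]
    have h0' : (0 : ℂ) ∉ segment ℝ 1 (w (i + 1) / w i) := by
      intro ⟨a', b', ha', hb', hab', heq⟩
      apply hqoff
      have hab'' : (a' : ℂ) + (b' : ℂ) = 1 := by exact_mod_cast hab'
      have hq0 : (a' : ℂ) * w i + (b' : ℂ) * w (i + 1) = 0 := by
        have h := congrArg (fun x => x * w i) heq
        simp only [Complex.real_smul, smul_eq_mul, mul_one, zero_mul] at h
        rw [add_mul, mul_assoc, div_mul_cancel₀ _ (hw i)] at h
        exact h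
      have : q = a' • v (i:ℤ) + b' • v ((i:ℤ) + 1) := by
        simp only [Complex.real_smul]
        rw [hwsucc] at hq0
        simp only [hwdef] at hq0
        linear_combination -hq0 - q * hab''
      exact hsub ⟨a', b', ha', hb', hab', this.symm⟩
    obtain ⟨hz0, hmin, hmax⟩ := sector hz' h0'
    refine ⟨ψ i + ((z - q) / w i).arg, ?_, ?_, ?_⟩
    · rw [hψsucc]
      calc min (ψ i) (ψ i + δ i) = min (ψ i + 0) (ψ i + δ i) := by rw [add_zero]
        _ = ψ i + min 0 (δ i) := min_add_add_left _ _ _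
        _ ≤ ψ i + ((z - q) / w i).arg := by exact add_le_add_right hmin _
    · rw [hψsucc]
      calc ψ i + ((z - q) / w i).arg ≤ ψ i + max 0 (δ i) := add_le_add_right hmax _
        _ = max (ψ i + 0) (ψ i + δ i) := (max_add_add_left _ _ _).symm
        _ = max (ψ i) (ψ i + δ i) := by rw [add_zero]
    · have hzw : z - q = ((z - q) / w i) * w i := (div_mul_cancel₀ _ (hw i)).symm
      obtain ⟨zp, hzpdef⟩ : ∃ zp, zp = (z - q) / w i := ⟨_, rfl⟩
      rw [← hzpdef]
      have hzw' : z - q = zp * w i := by rw [hzpdef]; exact hzw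
      have habs : ‖z - q‖ = ‖zp‖ * ‖w i‖ := by
        rw [← norm_mul, ← hzw']
      rw [habs, hzw']
      conv_lhs => rw [← Complex.norm_mul_exp_arg_mul_I zp, hpolar i]
      rw [mul_mul_mul_comm, ← Complex.exp_add]
      have hargs : ((zp.arg : ℂ) * Complex.I + (ψ i : ℂ) * Complex.I)
          = (((ψ i + zp.arg : ℝ)) : ℂ) * Complex.I := by push_cast; ring
      rw [hargs, Complex.ofReal_mul]
  -- the total angle sum
  set S : ℝ := ∑ i ∈ Finset.range n, |δ i| with hSdef
  have hSlt : S < 2 * π := by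
    rw [hSdef]
    calc ∑ i ∈ Finset.range n, |δ i|
        = ∑ i ∈ Finset.range n, EuclideanGeometry.angle (v (i:ℤ)) q (v ((i:ℤ) + 1)) :=
          Finset.sum_congr rfl fun i _ => (hangle i).symm
      _ < 2 * π := hcon
  have hdiff : ∀ i j : ℕ, i ≤ j → j ≤ n → |ψ j - ψ i| ≤ S := by
    intro i j hij hjn
    have h1 : ψ j - ψ i = ∑ k ∈ Finset.Ico i j, δ k := by
      simp only [hψdef]
      rw [Finset.sum_Ico_eq_sub _ hij]
      ring
    rw [h1]
    calc |∑ k ∈ Finset.Ico i j, δ k| ≤ ∑ k ∈ Finset.Ico i j, |δ k| :=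
          Finset.abs_sum_le_sum_abs _ _
      _ ≤ S := by
          rw [hSdef]
          apply Finset.sum_le_sum_of_subset_of_nonneg
          · intro k hk
            rw [Finset.mem_range]
            exact lt_of_lt_of_le (Finset.mem_Ico.1 hk).2 hjn
          · intro k _ _; exact abs_nonneg _
  obtain ⟨i₀, hi₀mem, hi₀⟩ := Finset.exists_min_image (Finset.range (n+1)) ψ
    ⟨0, Finset.mem_range.2 (Nat.succ_pos n)⟩
  obtain ⟨i₁, hi₁mem, hi₁⟩ := Finset.exists_max_image (Finset.range (n+1)) ψ
    ⟨0, Finset.mem_range.2 (Nat.succ_pos n)⟩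
  set m : ℝ := ψ i₀ with hmdef
  set M : ℝ := ψ i₁ with hMdef
  have hmM : m ≤ M := le_trans (hi₀ i₁ hi₁mem) (le_refl _)
  have hMmS : M - m ≤ S := by
    rcases le_total i₀ i₁ with h | h
    · have := hdiff i₀ i₁ h (Nat.lt_succ_iff.1 (Finset.mem_range.1 hi₁mem))
      rw [abs_le] at this; linarith [this.2]
    · have := hdiff i₁ i₀ h (Nat.lt_succ_iff.1 (Finset.mem_range.1 hi₀mem))
      rw [abs_le] at this; linarith [this.1]
  have hMm2π : M - m < 2 * π := lt_of_le_of_lt hMmS hSlt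
  clear_value m M
  set θstar : ℝ := (m + M) / 2 + π with hθdef
  clear_value θstar
  set u : ℂ := Complex.exp ((θstar : ℂ) * Complex.I) with hudef
  -- the ray from q in direction u misses P
  have hray : ∀ t : ℝ, 0 ≤ t → q + (t : ℂ) * u ∉ P := by
    intro t ht hmem
    rcases eq_or_lt_of_le ht with h0 | h0
    · apply hqoff
      rw [hPdef] at hmem ⊢
      simpa [← h0] using hmem
    · rw [hPdef, Set.mem_iUnion] at hmem
      obtain ⟨i, hmem⟩ := hmem
      rw [Set.mem_iUnion] at hmem
      obtain ⟨hi, hmem⟩ := hmem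
      obtain ⟨θ, hθ1, hθ2, hθ3⟩ := hseg i (Finset.mem_range.1 hi) _ hmem
      have habs : ‖q + (t : ℂ) * u - q‖ = t := by
        simp only [add_sub_cancel_left, norm_mul, Complex.norm_real, Real.norm_eq_abs, hudef,
          Complex.norm_exp_ofReal_mul_I, mul_one]
        exact abs_of_pos h0
      rw [habs] at hθ3
      have hts : q + (t : ℂ) * u - q = (t : ℂ) * u := add_sub_cancel_left q _
      rw [hts] at hθ3
      have hexp : Complex.exp ((θstar : ℂ) * Complex.I)
          = Complex.exp ((θ : ℂ) * Complex.I) := by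
        have ht0 : (t : ℂ) ≠ 0 := by exact_mod_cast ne_of_gt h0
        exact mul_left_cancel₀ ht0 (by rw [← hudef, hθ3])
      obtain ⟨k, hk⟩ := Complex.exp_eq_exp_iff_exists_int.1 hexp
      have hk2 : (θstar : ℂ) * Complex.I = ((θ + 2 * π * k : ℝ) : ℂ) * Complex.I := by
        push_cast
        linear_combination hk
      have hk3 : ((θstar : ℝ) : ℂ) = ((θ + 2 * π * k : ℝ) : ℂ) :=
        mul_right_cancel₀ Complex.I_ne_zero hk2
      have hkim' : θstar = θ + 2 * π * k := by exact_mod_cast hk3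
      -- bounds on θ
      have himem : (i : ℕ) ∈ Finset.range (n + 1) := Finset.mem_range.2
        (Nat.lt_succ_of_lt (Finset.mem_range.1 hi))
      have hi1mem : (i + 1 : ℕ) ∈ Finset.range (n + 1) := Finset.mem_range.2
        (Nat.succ_lt_succ (Finset.mem_range.1 hi))
      have hθm : m ≤ θ := le_trans (le_min (hi₀ i himem) (hi₀ (i+1) hi1mem)) hθ1
      have hθM : θ ≤ M := le_trans hθ2 (max_le (hi₁ i himem) (hi₁ (i+1) hi1mem))
      have hlow : 0 < θstar - θ := by rw [hθdef]; linarith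
      have hhigh : θstar - θ < 2 * π := by rw [hθdef]; linarith
      rw [hkim'] at hlow hhigh
      have hkpos : (0 : ℝ) < (k : ℝ) := by nlinarith
      have hk0 : 0 < k := by exact_mod_cast hkpos
      have hk1 : (1 : ℝ) ≤ (k : ℝ) := by exact_mod_cast hk0
      nlinarith
  -- the ray is connected, unbounded, inside Pᶜ
  set R : Set ℂ := (fun t : ℝ => q + (t : ℂ) * u) '' Set.Ici 0 with hRdef
  have hqR : q ∈ R := ⟨0, Set.self_mem_Ici, by simp⟩
  have hRsub : R ⊆ Pᶜ := by
    rintro x ⟨t, ht, rfl⟩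
    exact hray t ht
  have hconn : IsPreconnected R := by
    apply IsPreconnected.image isPreconnected_Ici
    exact Continuous.continuousOn
      (continuous_const.add (Complex.continuous_ofReal.mul continuous_const))
  have hRcomp : R ⊆ connectedComponentIn Pᶜ q :=
    hconn.subset_connectedComponentIn hqR hRsub
  obtain ⟨C, hC⟩ := hbounded.subset_closedBall q
  have hptR : q + ((|C| + 1 : ℝ) : ℂ) * u ∈ R := ⟨|C| + 1, Set.mem_Ici.2 (by positivity), rfl⟩
  have hball := hC (hRcomp hptR)
  rw [Metric.mem_closedBall] at hball
  have hdist : dist (q + ((|C| + 1 : ℝ) : ℂ) * u) q = |C| + 1 := by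
    rw [Complex.dist_eq]
    simp only [add_sub_cancel_left, norm_mul, Complex.norm_real, Real.norm_eq_abs, hudef,
      Complex.norm_exp_ofReal_mul_I, mul_one]
    exact abs_of_nonneg (by positivity)
  rw [hdist] at hball
  linarith [le_abs_self C]
end

section
/- Let q be a point in ℝ³ and v_0, v_1, ..., v_n points in ℝ³ all distinct from q, with v_n = v_0, such that ∑_{i=1}^n ∠ v_{i-1} q v_i = 2π. Then there exist points q', v_0', ..., v_n' in the plane ℝ², with v_n' = v_0', such that for every i, dist(q', v_i') = dist(q, v_i) and dist(v_{i-1}', v_i') = dist(v_{i-1}, v_i); i.e., the fan of triangles q v_{i-1} v_i can be developed isometrically into the plane so that consecutive triangles share edges and the configuration closes up. -/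
open EuclideanGeometry Set

private lemma planar_pt_dist (r₁ r₂ θ₁ θ₂ : ℝ) :
    dist ((WithLp.equiv 2 (Fin 2 → ℝ)).symm ![r₁ * Real.cos θ₁, r₁ * Real.sin θ₁])
      ((WithLp.equiv 2 (Fin 2 → ℝ)).symm ![r₂ * Real.cos θ₂, r₂ * Real.sin θ₂]) ^ 2
      = r₁ ^ 2 + r₂ ^ 2 - 2 * r₁ * r₂ * Real.cos (θ₂ - θ₁) := by
  rw [EuclideanSpace.dist_eq, Real.sq_sqrt (by positivity)]
  simp only [WithLp.equiv_symm_apply, WithLp.ofLp_toLp, PiLp.toLp_apply, Fin.sum_univ_two, Matrix.cons_val_zero,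
    Matrix.cons_val_one, Matrix.head_cons, Real.cos_sub, Real.dist_eq, sq_abs]
  have h1 := Real.sin_sq_add_cos_sq θ₁
  have h2 := Real.sin_sq_add_cos_sq θ₂
  nlinarith [h1, h2]

/-- Let `q ∈ ℝ³` and `v 0, v 1, …, v n` points of `ℝ³` all distinct from `q`,
with `v n = v 0`, such that `∑_{i=1}^n ∠ v (i-1) q (v i) = 2π`.  Then there exist points
`q'` and `v' 0, …, v' n` in the plane `ℝ²`, with `v' n = v' 0`, such that for every
`i ≤ n`, `dist q' (v' i) = dist q (v i)`, and for every `1 ≤ i ≤ n`,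
`dist (v' (i-1)) (v' i) = dist (v (i-1)) (v i)`: the fan of triangles `q v_{i-1} v_i`
develops isometrically into the plane, closing up. -/
theorem stmt3 (n : ℕ) (q : EuclideanSpace ℝ (Fin 3)) (v : ℕ → EuclideanSpace ℝ (Fin 3))
    (hq : ∀ i ≤ n, v i ≠ q) (hclose : v n = v 0)
    (hsum : ∑ i ∈ Finset.range n, EuclideanGeometry.angle (v i) q (v (i + 1)) = 2 * Real.pi) :
    ∃ (q' : EuclideanSpace ℝ (Fin 2)) (v' : ℕ → EuclideanSpace ℝ (Fin 2)),
      v' n = v' 0 ∧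
      (∀ i ≤ n, dist q' (v' i) = dist q (v i)) ∧
      (∀ i, 1 ≤ i → i ≤ n → dist (v' (i - 1)) (v' i) = dist (v (i - 1)) (v i)) := by
  set θ : ℕ → ℝ := fun i => ∑ j ∈ Finset.range i, EuclideanGeometry.angle (v j) q (v (j + 1))
    with hθ
  set r : ℕ → ℝ := fun i => dist q (v i) with hr
  set v' : ℕ → EuclideanSpace ℝ (Fin 2) := fun i =>
    (WithLp.equiv 2 (Fin 2 → ℝ)).symm ![r i * Real.cos (θ i), r i * Real.sin (θ i)] with hv'
  refine ⟨(WithLp.equiv 2 (Fin 2 → ℝ)).symm ![0, 0], v', ?_, ?_, ?_⟩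
  · have hθn : θ n = 2 * Real.pi := hsum
    have hθ0 : θ 0 = 0 := by simp [hθ]
    have hrn : r n = r 0 := by simp [hr, hclose]
    simp [hv', hθn, hθ0, hrn, Real.cos_two_pi, Real.sin_two_pi]
  · intro i _
    have h : dist ((WithLp.equiv 2 (Fin 2 → ℝ)).symm ![0, 0]) (v' i) ^ 2 = r i ^ 2 := by
      have := planar_pt_dist 0 (r i) 0 (θ i)
      simpa [hv'] using this
    have h1 : dist ((WithLp.equiv 2 (Fin 2 → ℝ)).symm ![0, 0]) (v' i) = |r i| := by
      have := congrArg Real.sqrt h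
      rwa [Real.sqrt_sq dist_nonneg, Real.sqrt_sq_eq_abs] at this
    rw [h1, abs_of_nonneg dist_nonneg]
  · rintro i hi1 hin
    obtain ⟨k, rfl⟩ : ∃ k, i = k + 1 := ⟨i - 1, (Nat.succ_pred_eq_of_pos hi1).symm⟩
    simp only [Nat.add_sub_cancel]
    have hθstep : θ (k + 1) - θ k = EuclideanGeometry.angle (v k) q (v (k + 1)) := by
      simp [hθ, Finset.sum_range_succ]
    have hplanar : dist (v' k) (v' (k + 1)) ^ 2
        = r k ^ 2 + r (k + 1) ^ 2 - 2 * r k * r (k + 1)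
            * Real.cos (EuclideanGeometry.angle (v k) q (v (k + 1))) := by
      rw [hv']
      rw [planar_pt_dist, hθstep]
    have hspace : dist (v k) (v (k + 1)) ^ 2
        = r k ^ 2 + r (k + 1) ^ 2 - 2 * r k * r (k + 1)
            * Real.cos (EuclideanGeometry.angle (v k) q (v (k + 1))) := by
      have := EuclideanGeometry.law_cos (v k) q (v (k + 1))
      simp only [hr]
      rw [dist_comm q (v k), dist_comm q (v (k + 1))] at *
      linarith [this]
    have := congrArg Real.sqrt (hplanar.trans hspace.symm)
    rwa [Real.sqrt_sq dist_nonneg, Real.sqrt_sq dist_nonneg] at this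
end
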